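/- (Proposition 6.7 of the paper, case q = ∞.) Let N be a normalized K-unconditional coefficient quasi-norm, and set s_m = inf{ N(1_A) : A ⊆ ℕ finite, |A| ≥ m } for m ≥ 1 (the lower democracy function; note s_m ≥ 1/K > 0 automatically). If ∑_{m=1}^∞ 1/s_m < ∞, then N is strongly absolute: for every R > 0 there exists C′ > 0 such that every finitely supported f : ℕ → ℝ satisfies ‖f‖₁ ≤ max( C′·‖f‖_∞, N(f)/R ). -/

import Mathlib

/-- A normalized `K`-unconditional coefficient quasi-norm on finitely supported
real sequences. -/
structure IsCoeffQuasiNorm (K : ℝ) (N : (ℕ →₀ ℝ) → ℝ) : Prop where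
  nonneg : ∀ f, 0 ≤ N f
  eq_zero_iff : ∀ f, N f = 0 ↔ f = 0
  smul : ∀ (t : ℝ) (f : ℕ →₀ ℝ), N (t • f) = |t| * N f
  normalized : ∀ n : ℕ, N (Finsupp.single n 1) = 1
  uncond : ∀ f g : ℕ →₀ ℝ, (∀ n, |f n| ≤ |g n|) → N f ≤ K * N g

/-- The lower democracy function: `s_m = inf {N(1_A) : A ⊆ ℕ finite, |A| ≥ m}`. -/
noncomputable def lowerDem (N : (ℕ →₀ ℝ) → ℝ) (m : ℕ) : ℝ :=
  sInf {x | ∃ A : Finset ℕ, m ≤ A.card ∧ x = N (∑ n ∈ A, Finsupp.single n 1)}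

open Finset

lemma ind_apply (A : Finset ℕ) (k : ℕ) :
    (∑ n ∈ A, Finsupp.single n (1:ℝ)) k = if k ∈ A then 1 else 0 := by
  classical
  rw [Finsupp.finset_sum_apply]
  simp [Finsupp.single_apply]

lemma lowerDem_setNonempty (N : (ℕ →₀ ℝ) → ℝ) (m : ℕ) :
    {x | ∃ A : Finset ℕ, m ≤ A.card ∧ x = N (∑ n ∈ A, Finsupp.single n 1)}.Nonempty :=
  ⟨_, Finset.range m, by simp, rfl⟩

lemma lowerDem_bddBelow {K : ℝ} {N : (ℕ →₀ ℝ) → ℝ} (hN : IsCoeffQuasiNorm K N) (m : ℕ) :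
    BddBelow {x | ∃ A : Finset ℕ, m ≤ A.card ∧ x = N (∑ n ∈ A, Finsupp.single n 1)} := by
  refine ⟨0, ?_⟩
  rintro x ⟨A, -, rfl⟩
  exact hN.nonneg _

lemma inv_K_le_lowerDem {K : ℝ} (hK : 1 ≤ K) {N : (ℕ →₀ ℝ) → ℝ}
    (hN : IsCoeffQuasiNorm K N) {m : ℕ} (hm : 1 ≤ m) : K⁻¹ ≤ lowerDem N m := by
  have hK0 : (0:ℝ) < K := lt_of_lt_of_le one_pos hK
  apply le_csInf (lowerDem_setNonempty N m)
  rintro x ⟨A, hA, rfl⟩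
  obtain ⟨n, hn⟩ : A.Nonempty := Finset.card_pos.mp (lt_of_lt_of_le hm hA)
  have h1 : (1:ℝ) ≤ K * N (∑ n ∈ A, Finsupp.single n 1) := by
    calc (1:ℝ) = N (Finsupp.single n 1) := (hN.normalized n).symm
    _ ≤ K * N (∑ n ∈ A, Finsupp.single n 1) := by
        apply hN.uncond
        intro k
        rw [ind_apply, Finsupp.single_apply]
        rcases eq_or_ne n k with rfl | h
        · simp [hn]
        · simp [h]
  calc K⁻¹ = K⁻¹ * 1 := (mul_one _).symm
  _ ≤ K⁻¹ * (K * N (∑ n ∈ A, Finsupp.single n 1)) := by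
      exact mul_le_mul_of_nonneg_left h1 (by positivity)
  _ = N (∑ n ∈ A, Finsupp.single n 1) := inv_mul_cancel_left₀ hK0.ne' _

lemma lowerDem_pos {K : ℝ} (hK : 1 ≤ K) {N : (ℕ →₀ ℝ) → ℝ}
    (hN : IsCoeffQuasiNorm K N) {m : ℕ} (hm : 1 ≤ m) : 0 < lowerDem N m :=
  lt_of_lt_of_le (by positivity : (0:ℝ) < K⁻¹) (inv_K_le_lowerDem hK hN hm)

lemma lowerDem_le {K : ℝ} {N : (ℕ →₀ ℝ) → ℝ} (hN : IsCoeffQuasiNorm K N)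
    {m : ℕ} (A : Finset ℕ) (h : m ≤ A.card) :
    lowerDem N m ≤ N (∑ n ∈ A, Finsupp.single n 1) :=
  csInf_le (lowerDem_bddBelow hN m) ⟨A, h, rfl⟩

lemma key_le {K : ℝ} (hK : 1 ≤ K) {N : (ℕ →₀ ℝ) → ℝ} (hN : IsCoeffQuasiNorm K N)
    (f : ℕ →₀ ℝ) {t : ℝ} (ht : 0 ≤ t) (A : Finset ℕ) (hA : A.Nonempty)
    (hle : ∀ k ∈ A, t ≤ |f k|) : t ≤ K * N f / lowerDem N A.card := by
  have hs0 : 0 < lowerDem N A.card :=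
    lowerDem_pos hK hN (Finset.card_pos.mpr hA)
  rw [le_div_iff₀ hs0]
  calc t * lowerDem N A.card ≤ t * N (∑ n ∈ A, Finsupp.single n 1) :=
        mul_le_mul_of_nonneg_left (lowerDem_le hN A le_rfl) ht
  _ = N (t • ∑ n ∈ A, Finsupp.single n 1) := by rw [hN.smul, abs_of_nonneg ht]
  _ ≤ K * N f := by
      apply hN.uncond
      intro k
      rw [Finsupp.smul_apply, ind_apply, smul_eq_mul]
      by_cases hk : k ∈ A
      · simpa [hk, abs_of_nonneg ht] using hle k hk
      · simp [hk]

/-- Proposition 6.7, case `q = ∞`: if the lower democracy function of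
a normalized `K`-unconditional coefficient quasi-norm satisfies
`∑_{m=1}^∞ 1/s_m < ∞`, then `N` is strongly absolute. -/
theorem stmt16 (K : ℝ) (hK : 1 ≤ K)
    (N : (ℕ →₀ ℝ) → ℝ) (hN : IsCoeffQuasiNorm K N)
    (hsum : Summable fun m : ℕ => 1 / lowerDem N (m + 1)) :
    ∀ R : ℝ, 0 < R → ∃ C' > 0, ∀ f : ℕ →₀ ℝ,
      ∑ n ∈ f.support, |f n| ≤ max (C' * ⨆ n, |f n|) (N f / R) := by
  classical
  intro R hR
  have hK0 : (0:ℝ) < K := lt_of_lt_of_le one_pos hK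
  set g : ℕ → ℝ := fun m => 1 / lowerDem N (m + 1) with hg
  have hgpos : ∀ m, 0 < g m := fun m =>
    one_div_pos.mpr (lowerDem_pos hK hN (Nat.le_add_left 1 m))
  set ε : ℝ := 1 / (2 * R * K) with hε
  have hε0 : 0 < ε := by positivity
  -- find a tail cutoff M
  obtain ⟨M, hM⟩ : ∃ M, (∑' m, g m) - ε < ∑ i ∈ Finset.range M, g i := by
    have htend := hsum.hasSum.tendsto_sum_nat
    exact (htend.eventually (eventually_gt_nhds (by linarith))).exists
  have htail : ∀ F : Finset ℕ, (∀ m ∈ F, M < m) → ∑ m ∈ F, 1 / lowerDem N m ≤ ε := by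
    intro F hF
    have h1 : ∑ m ∈ F, 1 / lowerDem N m = ∑ m ∈ F.image (· - 1), g m := by
      rw [Finset.sum_image (by
        intro a ha b hb hab
        have := hF a ha; have := hF b hb
        simp only at hab
        omega)]
      apply Finset.sum_congr rfl
      intro m hm
      have : m - 1 + 1 = m := by have := hF m hm; omega
      simp [hg, this]
    set G := F.image (· - 1) with hG
    set c := M + G.sup id + 1 with hc
    have hsub : G ⊆ Finset.Ico M c := by
      intro m hm
      simp only [hG, Finset.mem_image] at hm
      obtain ⟨a, ha, rfl⟩ := hm
      have h2 := hF a ha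
      refine Finset.mem_Ico.mpr ⟨by omega, ?_⟩
      have : a - 1 ≤ G.sup id := Finset.le_sup (f := id) (Finset.mem_image_of_mem _ ha)
      omega
    calc ∑ m ∈ F, 1 / lowerDem N m = ∑ m ∈ G, g m := h1
    _ ≤ ∑ m ∈ Finset.Ico M c, g m :=
        Finset.sum_le_sum_of_subset_of_nonneg hsub (fun i _ _ => (hgpos i).le)
    _ = ∑ m ∈ Finset.range c, g m - ∑ m ∈ Finset.range M, g m :=
        Finset.sum_Ico_eq_sub _ (by omega)
    _ ≤ (∑' m, g m) - ∑ m ∈ Finset.range M, g m := by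
        have := Summable.sum_le_tsum (Finset.range c) (fun i _ => (hgpos i).le) hsum
        linarith
    _ ≤ ε := by linarith
  refine ⟨2 * M + 1, by positivity, ?_⟩
  intro f
  by_cases hf : f = 0
  · subst hf
    have h0 : N 0 = 0 := (hN.eq_zero_iff 0).mpr rfl
    simp [h0, ciSup_const]
  -- sup of |f|
  have hbdd : BddAbove (Set.range fun n => |f n|) := by
    refine ⟨∑ n ∈ f.support, |f n|, ?_⟩
    rintro x ⟨k, rfl⟩
    show |f k| ≤ ∑ n ∈ f.support, |f n|
    by_cases hk : k ∈ f.support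
    · exact Finset.single_le_sum (f := fun n => |f n|) (fun i _ => abs_nonneg _) hk
    · rw [Finsupp.notMem_support_iff.mp hk, abs_zero]
      exact Finset.sum_nonneg fun i _ => abs_nonneg _
  set T : ℝ := ⨆ n, |f n| with hT
  have hle_T : ∀ n, |f n| ≤ T := fun n => le_ciSup hbdd n
  have hT0 : 0 ≤ T := le_trans (abs_nonneg _) (hle_T 0)
  set S := f.support with hS
  set key : ℕ → Lex (ℝ × ℕ) := fun n => toLex (-|f n|, n) with hkey
  set A : ℕ → Finset ℕ := fun n => S.filter (fun k => key k ≤ key n) with hA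
  set r : ℕ → ℕ := fun n => (A n).card with hr
  have hself : ∀ n ∈ S, n ∈ A n := fun n hn => Finset.mem_filter.mpr ⟨hn, le_refl _⟩
  have hr1 : ∀ n ∈ S, 1 ≤ r n := fun n hn => Finset.card_pos.mpr ⟨n, hself n hn⟩
  have hrS : ∀ n, r n ≤ S.card := fun n => Finset.card_le_card (Finset.filter_subset _ _)
  have hkeyinj : ∀ m n, key m = key n → m = n := by
    intro m n h
    have := congrArg (fun x => (ofLex x).2) h
    simpa [hkey] using this
  have hlt : ∀ m ∈ S, ∀ n ∈ S, key m < key n → r m < r n := by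
    intro m hm n hn h
    apply Finset.card_lt_card
    constructor
    · intro k hk
      rw [Finset.mem_filter] at hk ⊢
      exact ⟨hk.1, le_of_lt (lt_of_le_of_lt hk.2 h)⟩
    · intro hsub
      have hn' := hsub (hself n hn)
      rw [Finset.mem_filter] at hn'
      exact absurd (lt_of_le_of_lt hn'.2 h) (lt_irrefl _)
  have hinj : Set.InjOn r S := by
    intro m hm n hn h
    rcases lt_trichotomy (key m) (key n) with hlt' | heq | hgt
    · exact absurd h (Nat.ne_of_lt (hlt m hm n hn hlt'))
    · exact hkeyinj m n heq
    · exact absurd h.symm (Nat.ne_of_lt (hlt n hn m hm hgt))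
  have habs : ∀ n, ∀ k ∈ A n, |f n| ≤ |f k| := by
    intro n k hk
    have h2 := (Finset.mem_filter.mp hk).2
    rw [hkey] at h2
    rcases Prod.Lex.le_iff.mp h2 with hlt' | ⟨heq, -⟩
    · simp only [ofLex_toLex] at hlt'; linarith
    · simp only [ofLex_toLex] at heq; linarith
  have hpoint : ∀ n ∈ S, |f n| ≤ K * N f / lowerDem N (r n) := by
    intro n hn
    exact key_le hK hN f (abs_nonneg _) (A n) ⟨n, hself n hn⟩ (habs n)
  -- split the sum
  rw [← Finset.sum_filter_add_sum_filter_not S (fun n => r n ≤ M) (fun n => |f n|)]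
  have hc1 : (S.filter (fun n => r n ≤ M)).card ≤ M := by
    calc (S.filter (fun n => r n ≤ M)).card ≤ (Finset.Icc 1 M).card := by
          apply Finset.card_le_card_of_injOn (t := Finset.Icc 1 M) r
          · intro n hn
            rw [Finset.mem_coe, Finset.mem_filter] at hn
            exact Finset.mem_Icc.mpr ⟨hr1 n hn.1, hn.2⟩
          · exact hinj.mono (fun x hx => (Finset.mem_filter.mp hx).1)
    _ = M := by rw [Nat.card_Icc]; omega
  have hsum1 : ∑ n ∈ S.filter (fun n => r n ≤ M), |f n| ≤ (M : ℝ) * T := by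
    calc ∑ n ∈ S.filter (fun n => r n ≤ M), |f n|
        ≤ (S.filter (fun n => r n ≤ M)).card • T :=
          Finset.sum_le_card_nsmul _ _ T (fun n _ => hle_T n)
    _ = ((S.filter (fun n => r n ≤ M)).card : ℝ) * T := by rw [nsmul_eq_mul]
    _ ≤ (M : ℝ) * T := by
        apply mul_le_mul_of_nonneg_right _ hT0
        exact_mod_cast hc1
  have hsum2 : ∑ n ∈ S.filter (fun n => ¬ r n ≤ M), |f n| ≤ N f / (2 * R) := by
    have hKN : 0 ≤ K * N f := mul_nonneg hK0.le (hN.nonneg f)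
    calc ∑ n ∈ S.filter (fun n => ¬ r n ≤ M), |f n|
        ≤ ∑ n ∈ S.filter (fun n => ¬ r n ≤ M), K * N f * (1 / lowerDem N (r n)) := by
          apply Finset.sum_le_sum
          intro n hn
          rw [mul_one_div]
          exact hpoint n (Finset.mem_filter.mp hn).1
    _ = K * N f * ∑ n ∈ S.filter (fun n => ¬ r n ≤ M), 1 / lowerDem N (r n) := by
          rw [Finset.mul_sum]
    _ ≤ K * N f * ε := by
          apply mul_le_mul_of_nonneg_left _ hKN
          have hinj2 : ∀ a ∈ S.filter (fun n => ¬ r n ≤ M), ∀ b ∈ S.filter (fun n => ¬ r n ≤ M),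
              r a = r b → a = b := fun a ha b hb h =>
            hinj (Finset.mem_filter.mp ha).1 (Finset.mem_filter.mp hb).1 h
          calc ∑ n ∈ S.filter (fun n => ¬ r n ≤ M), 1 / lowerDem N (r n)
              = ∑ m ∈ (S.filter (fun n => ¬ r n ≤ M)).image r, 1 / lowerDem N m :=
                (Finset.sum_image (f := fun m => 1 / lowerDem N m) (g := r) hinj2).symm
          _ ≤ ε := by
              apply htail
              intro m hm
              obtain ⟨n, hn, rfl⟩ := Finset.mem_image.mp hm
              exact Nat.not_le.mp (Finset.mem_filter.mp hn).2
    _ = N f / (2 * R) := by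
          rw [hε]; field_simp
  have heq2 : N f / (2 * R) = (N f / R) / 2 := by ring
  rcases le_total ((M:ℝ) * T) (N f / (2 * R)) with hc | hc
  · have : ∑ n ∈ S.filter (fun n => r n ≤ M), |f n|
        + ∑ n ∈ S.filter (fun n => ¬ r n ≤ M), |f n| ≤ N f / R := by
      rw [heq2] at hc hsum2
      linarith
    exact le_trans this (le_max_right _ _)
  · have : ∑ n ∈ S.filter (fun n => r n ≤ M), |f n|
        + ∑ n ∈ S.filter (fun n => ¬ r n ≤ M), |f n| ≤ (2 * M + 1) * T := by
      nlinarith [hsum1, hsum2]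
    exact le_trans this (le_max_left _ _)
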